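/- arXiv:1705.07470 — 7 statements merged into one kernel-verified Lean document; each statement's English description precedes it below -/
import Mathlib

section
/- Let G be a finitely generated group and J ≤ G a subgroup. Then there exists a group homomorphism χ : G → ℝ whose kernel is exactly the radical √(J[G,G]) = {g ∈ G | ∃ q ≠ 0, g^q ∈ J[G,G]}. -/
open Module
open scoped commutatorElement

/-- A quotient by a subgroup containing the commutator subgroup is commutative. -/
noncomputable def commGroupOfCommutatorLe {G : Type*} [Group G] (N : Subgroup G) [N.Normal]
    (h : commutator G ≤ N) : CommGroup (G ⧸ N) :=
  { (inferInstance : Group (G ⧸ N)) with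
    mul_comm := fun a b => by
      obtain ⟨a, rfl⟩ := QuotientGroup.mk_surjective a
      obtain ⟨b, rfl⟩ := QuotientGroup.mk_surjective b
      rw [← QuotientGroup.mk_mul, ← QuotientGroup.mk_mul, QuotientGroup.eq]
      apply h
      have hc : (a * b)⁻¹ * (b * a) = ⁅b⁻¹, a⁻¹⁆ := by
        rw [commutatorElement_def]; group
      rw [hc, commutator_def]
      exact Subgroup.commutator_mem_commutator (Subgroup.mem_top _) (Subgroup.mem_top _) }

/-- A finitely generated abelian group has a character to `ℝ` whose kernel is
exactly the torsion elements. -/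
theorem exists_char_torsion (Q : Type*) [CommGroup Q] [Group.FG Q] :
    ∃ χ : Q →* Multiplicative ℝ, ∀ x : Q, χ x = 1 ↔ IsOfFinOrder x := by
  classical
  let Q2 := Q ⧸ CommGroup.torsion Q
  let M := Additive Q2
  haveI : Module.Finite ℤ M := Module.Finite.iff_addGroup_fg.mpr inferInstance
  haveI : NoZeroSMulDivisors ℤ M := by
    exact IsAddTorsionFree.to_noZeroSMulDivisors_int
  haveI : Module.Free ℤ M := Module.free_of_finite_type_torsion_free'
  let ι := Module.Free.ChooseBasisIndex ℤ M
  let b : Basis ι ℤ M := Module.Free.chooseBasis ℤ M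
  have hx : Transcendental ℚ (liouvilleNumber 3) := fun h =>
    (transcendental_liouvilleNumber (by norm_num))
      ((IsFractionRing.isAlgebraic_iff ℤ ℚ ℝ).mpr h)
  have li0 := hx.linearIndependent_sub_inv
  let emb : ι ↪ ℚ :=
    ⟨fun i => ((Fintype.equivFin ι i : ℕ) : ℚ), fun i j hij => by
      apply (Fintype.equivFin ι).injective
      exact Fin.ext (Nat.cast_injective hij)⟩
  let c : ι → ℝ := fun i => (liouvilleNumber 3 - algebraMap ℚ ℝ (emb i))⁻¹
  have li : LinearIndependent ℤ c :=
    (li0.comp emb emb.injective).restrict_scalars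
      (fun r s hrs => by simpa using hrs)
  let e : M →ₗ[ℤ] ℝ := (Finsupp.linearCombination ℤ c).comp b.repr.toLinearMap
  have he : Function.Injective e :=
    by have := Function.Injective.comp (g := Finsupp.linearCombination ℤ c) li b.repr.injective; exact this
  refine ⟨MonoidHom.mk'
    (fun q => Multiplicative.ofAdd (e (Additive.ofMul (QuotientGroup.mk q : Q2))))
    (fun x y => by
      simp only [QuotientGroup.mk_mul, ofMul_mul, map_add, ofAdd_add]), fun x => ?_⟩
  rw [← CommGroup.mem_torsion, ← QuotientGroup.eq_one_iff]
  show Multiplicative.ofAdd (e (Additive.ofMul (QuotientGroup.mk x : Q2))) = 1 ↔ _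
  constructor
  · intro h
    have h0 : e (Additive.ofMul (QuotientGroup.mk x : Q2)) = 0 := by
      simpa using h
    have h1 : Additive.ofMul (QuotientGroup.mk x : Q2) = 0 :=
      he (h0.trans (map_zero e).symm)
    simpa using h1
  · intro h
    rw [h]
    simp

/-- If `G` is a finitely generated group and `J ≤ G`, then there is a character
`χ : G → ℝ` (a homomorphism to the additive reals, written multiplicatively) whose kernel
is exactly the radical `√(J[G,G]) = {g | ∃ q ≠ 0, g^q ∈ J[G,G]}`. -/
theorem stmt_2 {G : Type*} [Group G] [Group.FG G] (J : Subgroup G) :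
    ∃ χ : G →* Multiplicative ℝ,
      ∀ g : G, χ g = 1 ↔ ∃ q : ℤ, q ≠ 0 ∧ g ^ q ∈ J ⊔ commutator G := by
  classical
  have hcle : commutator G ≤ J ⊔ commutator G := le_sup_right
  haveI hN : (J ⊔ commutator G).Normal := by
    constructor
    intro n hn g
    have h1 : ⁅g, n⁆ ∈ J ⊔ commutator G := by
      apply hcle
      rw [commutator_def]
      exact Subgroup.commutator_mem_commutator (Subgroup.mem_top _) (Subgroup.mem_top _)
    have h2 : g * n * g⁻¹ = ⁅g, n⁆ * n := by rw [commutatorElement_def]; group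
    rw [h2]
    exact Subgroup.mul_mem _ h1 hn
  letI : CommGroup (G ⧸ (J ⊔ commutator G)) := commGroupOfCommutatorLe _ hcle
  obtain ⟨χ, hχ⟩ := @exists_char_torsion (G ⧸ (J ⊔ commutator G)) _ (QuotientGroup.fg _)
  refine ⟨χ.comp (QuotientGroup.mk' (J ⊔ commutator G)), fun g => ?_⟩
  rw [show (χ.comp (QuotientGroup.mk' (J ⊔ commutator G))) g = χ (QuotientGroup.mk' _ g) from rfl, hχ, isOfFinOrder_iff_zpow_eq_one]
  simp only [QuotientGroup.mk'_apply]
  constructor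
  · rintro ⟨q, hq, hq1⟩
    exact ⟨q, hq, (QuotientGroup.eq_one_iff _).mp (by rw [QuotientGroup.mk_zpow]; exact hq1)⟩
  · rintro ⟨q, hq, hq1⟩
    exact ⟨q, hq, by exact (QuotientGroup.mk_zpow (N := J ⊔ commutator G) g q).symm.trans ((QuotientGroup.eq_one_iff _).mpr hq1)⟩
end

section
/- Let G be a finitely generated group with a finite generating set S such that the images of the elements of S in the real vector space V = (G/[G,G]) ⊗ ℝ form a basis of V. If J ≤ G is a subgroup generated by k elements, then at most k elements of S lie in the radical √(J[G,G]). -/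
open TensorProduct

/-- The natural map `G → (G/[G,G]) ⊗ ℝ`. -/
noncomputable def euclideanization (G : Type*) [Group G] :
    G → ℝ ⊗[ℤ] (Additive (Abelianization G)) :=
  fun g => (1 : ℝ) ⊗ₜ[ℤ] Additive.ofMul (Abelianization.of g)

set_option maxHeartbeats 1000000 in
/-- If `G` has a finite generating set `S` whose image in `V = (G/[G,G]) ⊗ ℝ` is a basis
of `V`, and `J ≤ G` is a subgroup generated by `k` elements, then at most `k` elements of
`S` lie in the radical `√(J[G,G])`. -/
theorem stmt_4 {G : Type*} [Group G] (S : Finset G)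
    (hgen : Subgroup.closure (S : Set G) = ⊤)
    (hli : LinearIndependent ℝ (fun s : S => euclideanization G s))
    (hspan : Submodule.span ℝ (euclideanization G '' (S : Set G)) = ⊤)
    (J : Subgroup G) (k : ℕ) (T : Finset G) (hT : Subgroup.closure (T : Set G) = J)
    (hk : T.card = k) :
    {s : G | s ∈ S ∧ ∃ q : ℤ, q ≠ 0 ∧ s ^ q ∈ J ⊔ commutator G}.ncard ≤ k := by
  classical
  set W : Submodule ℝ (ℝ ⊗[ℤ] (Additive (Abelianization G))) :=
    Submodule.span ℝ (euclideanization G '' (T : Set G)) with hWdef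
  -- basic properties of the map
  have hone : euclideanization G (1 : G) = 0 := by
    simp [euclideanization]
  have hmul : ∀ a b : G, euclideanization G (a * b) =
      euclideanization G a + euclideanization G b := by
    intro a b
    simp [euclideanization, ofMul_mul, TensorProduct.tmul_add]
  have hinv : ∀ a : G, euclideanization G a⁻¹ = - euclideanization G a := by
    intro a
    simp [euclideanization, ofMul_inv, TensorProduct.tmul_neg]
  have hzpow : ∀ (a : G) (q : ℤ), euclideanization G (a ^ q) =
      q • euclideanization G a := by
    intro a q
    simp [euclideanization, map_zpow, ofMul_zpow, TensorProduct.tmul_smul]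
  -- the subgroup of elements mapping into W
  let K : Subgroup G :=
  { carrier := {g | euclideanization G g ∈ W}
    one_mem' := by simp [Set.mem_setOf_eq, hone]
    mul_mem' := by
      intro a b ha hb
      simp only [Set.mem_setOf_eq, hmul] at *
      exact W.add_mem ha hb
    inv_mem' := by
      intro a ha
      simp only [Set.mem_setOf_eq, hinv] at *
      exact W.neg_mem ha }
  have hJK : J ⊔ commutator G ≤ K := by
    rw [← hT, commutator_eq_closure, ← Subgroup.closure_union, Subgroup.closure_le]
    rintro g (hg | hg)
    · exact Submodule.subset_span ⟨g, hg, rfl⟩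
    · obtain ⟨a, b, rfl⟩ := hg
      show euclideanization G _ ∈ W
      have : euclideanization G (open scoped commutatorElement in ⁅a, b⁆) = 0 := by
        simp only [commutatorElement_def, hmul, hinv]
        abel
      rw [this]; exact W.zero_mem
  -- the filtered finset
  let A : Finset G := S.filter (fun s => euclideanization G s ∈ W)
  have hsub : {s : G | s ∈ S ∧ ∃ q : ℤ, q ≠ 0 ∧ s ^ q ∈ J ⊔ commutator G} ⊆ ↑A := by
    rintro s ⟨hsS, q, hq, hmem⟩
    have h1 : euclideanization G (s ^ q) ∈ W := hJK hmem
    rw [hzpow] at h1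
    have h2 : (q : ℝ) • euclideanization G s ∈ W := by
      rwa [Int.cast_smul_eq_zsmul]
    have h3 : euclideanization G s ∈ W := by
      have := W.smul_mem ((q : ℝ)⁻¹) h2
      rwa [smul_smul, inv_mul_cancel₀ (by exact_mod_cast hq), one_smul] at this
    exact Finset.mem_coe.mpr (Finset.mem_filter.mpr ⟨hsS, h3⟩)
  have hncard : {s : G | s ∈ S ∧ ∃ q : ℤ, q ≠ 0 ∧ s ^ q ∈ J ⊔ commutator G}.ncard ≤ A.card := by
    calc _ ≤ (↑A : Set G).ncard := Set.ncard_le_ncard hsub A.finite_toSet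
    _ = A.card := Set.ncard_coe_finset A
  -- finite dimensionality of W
  have hWfin : FiniteDimensional ℝ W :=
    FiniteDimensional.span_of_finite ℝ ((T.finite_toSet).image _)
  -- finrank W ≤ k
  have hrank : Module.finrank ℝ W ≤ k := by
    rw [hWdef, ← Finset.coe_image]
    refine le_trans (finrank_span_finset_le_card _) (le_trans Finset.card_image_le hk.le)
  -- A.card ≤ finrank W via linear independence
  have hAcard : A.card ≤ Module.finrank ℝ W := by
    let incl : {x // x ∈ A} → {x // x ∈ S} := fun a => ⟨a.1, (Finset.mem_filter.mp a.2).1⟩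
    have hinj : Function.Injective incl := by
      intro a b hab
      exact Subtype.ext (congrArg Subtype.val hab : (incl a).val = (incl b).val)
    let f : {x // x ∈ A} → W := fun a =>
      ⟨euclideanization G a.1, (Finset.mem_filter.mp a.2).2⟩
    have hlif : LinearIndependent ℝ f :=
      LinearIndependent.of_comp W.subtype (hli.comp incl hinj)
    have := hlif.fintype_card_le_finrank
    simpa [Fintype.card_coe] using this
  omega
end

section
/- In the free group F₂ on generators v and w, if q and r are nonzero integers and c, d lie in the commutator subgroup [F₂,F₂], then the elements v^q c and w^r d do not commute. -/
open LaurentPolynomial SemidirectProduct Multiplicative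

noncomputable section FGAux

abbrev Rlp : Type := LaurentPolynomial ℤ

/-- `T` as a group hom into units. -/
def Tunits : Multiplicative ℤ →* Rlpˣ :=
  MonoidHom.mk' (fun n => ⟨T n.toAdd, T (-n.toAdd),
      by rw [← T_add]; simp, by rw [← T_add]; simp⟩)
    (by intro a b; apply Units.ext; show T (a * b).toAdd = T a.toAdd * T b.toAdd
        rw [toAdd_mul, T_add])

/-- AddAut to MulAut on Multiplicative. -/
def addAutToMulAut (α : Type) [AddGroup α] : Multiplicative (AddAut α) →* MulAut (Multiplicative α) where
  toFun e := AddEquiv.toMultiplicative e.toAdd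
  map_one' := rfl
  map_mul' _ _ := rfl

def φA : Multiplicative ℤ →* MulAut (Multiplicative Rlp) :=
  (addAutToMulAut Rlp).comp (AddAut.mulLeft.comp Tunits)

@[simp] lemma φA_apply (g : Multiplicative ℤ) (a : Multiplicative Rlp) :
    φA g a = ofAdd (T g.toAdd * a.toAdd) := rfl

abbrev GG := Multiplicative Rlp ⋊[φA] Multiplicative ℤ

def ψF : FreeGroup (Fin 2) →* GG :=
  FreeGroup.lift (fun i => if i = (0 : Fin 2) then inl (ofAdd (1 : Rlp))
    else inr (ofAdd (1 : ℤ)))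

@[simp] lemma ψF_zero : ψF (FreeGroup.of (0 : Fin 2)) = inl (ofAdd (1 : Rlp)) := by
  simp [ψF]

@[simp] lemma ψF_one : ψF (FreeGroup.of (1 : Fin 2)) = inr (ofAdd (1 : ℤ)) := by
  simp [ψF]

/-- augmentation -/
def εA : Rlp →ₐ[ℤ] ℤ := AddMonoidAlgebra.lift ℤ ℤ ℤ 1

@[simp] lemma εA_T (n : ℤ) : εA (T n) = 1 := by
  rw [show (T n : Rlp) = AddMonoidAlgebra.single n (1:ℤ) from rfl]
  rw [show εA (AddMonoidAlgebra.single n (1:ℤ)) = _ from AddMonoidAlgebra.lift_single _ _ _]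
  simp

def ηA : GG →* Multiplicative ℤ :=
  SemidirectProduct.lift (AddMonoidHom.toMultiplicative εA.toAddMonoidHom) 1
    (by
      intro g
      refine MonoidHom.ext fun a => ?_
      simp [MonoidHom.comp_apply])

example : NoZeroDivisors Rlp := inferInstance

end FGAux

/-- In the free group `F₂` on generators `v = of 0`, `w = of 1`: if `q, r` are nonzero
integers and `c, d` lie in the commutator subgroup, then `v^q c` and `w^r d` do not
commute. -/
theorem stmt_6 (q r : ℤ) (hq : q ≠ 0) (hr : r ≠ 0)
    (c d : FreeGroup (Fin 2)) (hc : c ∈ commutator (FreeGroup (Fin 2)))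
    (hd : d ∈ commutator (FreeGroup (Fin 2))) :
    ¬ Commute (FreeGroup.of (0 : Fin 2) ^ q * c) (FreeGroup.of (1 : Fin 2) ^ r * d) := by
  intro hcom
  have hmap := hcom.map ψF
  -- right component of ψF c and ψF d is 1
  have hcr : (ψF c).right = 1 :=
    Abelianization.commutator_subset_ker (rightHom.comp ψF) hc
  -- augmentation of ψF c is 1
  have hca : ηA (ψF c) = 1 :=
    Abelianization.commutator_subset_ker (ηA.comp ψF) hc
  have hdr : (ψF d).right = 1 :=
    Abelianization.commutator_subset_ker (rightHom.comp ψF) hd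
  have hcc : ψF c = inl (ψF c).left := by
    conv_lhs => rw [← inl_left_mul_inr_right (ψF c)]
    rw [hcr, map_one, mul_one]
  have hdd : ψF d = inl (ψF d).left := by
    conv_lhs => rw [← inl_left_mul_inr_right (ψF d)]
    rw [hdr, map_one, mul_one]
  have h1 : (inl (ofAdd (1:Rlp)) : GG) ^ q = inl (ofAdd ((q : Rlp))) := by
    rw [← map_zpow]
    congr 1
    rw [← ofAdd_zsmul]
    simp
  have h2 : (inr (ofAdd (1:ℤ)) : GG) ^ r = inr (ofAdd r) := by
    rw [← map_zpow]
    congr 1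
    rw [← ofAdd_zsmul]
    simp
  rw [Commute, SemiconjBy, map_mul, map_mul, map_zpow, map_zpow, ψF_zero, ψF_one,
    hcc, hdd, h1, h2] at hmap
  have hleft := congrArg SemidirectProduct.left hmap
  simp [mul_left, mul_right] at hleft
  have hadd := congrArg Multiplicative.toAdd hleft
  simp only [toAdd_mul, toAdd_ofAdd] at hadd
  set a : Rlp := Multiplicative.toAdd (ψF c).left with ha
  have hTr : (T r : Rlp) - 1 ≠ 0 := by
    rw [sub_ne_zero]
    intro h
    rw [← T_zero] at h
    exact hr ((AddMonoidAlgebra.single_left_inj one_ne_zero).mp h)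
  have h0 : ((q : Rlp) + a) * ((T r : Rlp) - 1) = 0 := by linear_combination -hadd
  have hqa : (q : Rlp) + a = 0 := by
    rcases mul_eq_zero.mp h0 with h | h
    · exact h
    · exact absurd h hTr
  -- augmentation
  rw [hcc] at hca
  simp only [ηA, SemidirectProduct.lift_inl, AddMonoidHom.toMultiplicative,
    AddMonoidHom.coe_mk, MulEquiv.coe_mk, Equiv.coe_fn_mk, MonoidHom.coe_mk,
    OneHom.coe_mk] at hca
  have hε : εA a = 0 := by
    have := congrArg Multiplicative.toAdd hca
    simpa using this
  have : (q : ℤ) = 0 := by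
    have h' := congrArg εA hqa
    rw [map_add, map_zero, hε, add_zero, map_intCast] at h'
    exact h'
  exact hq this
end

section
/- Let G = F₂ × ℤ where F₂ is free on generators x, y. If q, r are nonzero integers and c, d ∈ [G,G], then the elements (x,0)^q · c and (y,0)^r · d generate a non-abelian free subgroup of G. -/
open Pointwise

abbrev F2 := FreeGroup (Fin 2)

/-- Nonzero integer vectors. -/
abbrev V : Type := {v : ℤ × ℤ // v ≠ 0}

lemma Vne (u w k : ℤ) (h : ((u, w) : ℤ × ℤ) ≠ 0) : ((u + k * w, w) : ℤ × ℤ) ≠ 0 := by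
  intro heq
  apply h
  rw [Prod.ext_iff] at heq ⊢
  simp only [Prod.fst_zero, Prod.snd_zero] at heq ⊢
  obtain ⟨h1, h2⟩ := heq
  subst h2
  simp at h1
  exact ⟨h1, rfl⟩

lemma Vne' (u w k : ℤ) (h : ((u, w) : ℤ × ℤ) ≠ 0) : ((u, w + k * u) : ℤ × ℤ) ≠ 0 := by
  intro heq
  apply h
  rw [Prod.ext_iff] at heq ⊢
  simp only [Prod.fst_zero, Prod.snd_zero] at heq ⊢
  obtain ⟨h1, h2⟩ := heq
  subst h1
  simp at h2
  exact ⟨rfl, h2⟩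

/-- The permutation (u,w) ↦ (u+2w, w) of V. -/
def sA : Equiv.Perm V where
  toFun v := ⟨(v.1.1 + 2 * v.1.2, v.1.2), Vne _ _ 2 v.2⟩
  invFun v := ⟨(v.1.1 + (-2) * v.1.2, v.1.2), Vne _ _ (-2) v.2⟩
  left_inv := by rintro ⟨⟨u, w⟩, h⟩; apply Subtype.ext; simp
  right_inv := by rintro ⟨⟨u, w⟩, h⟩; apply Subtype.ext; simp

/-- The permutation (u,w) ↦ (u, w+2u) of V. -/
def sB : Equiv.Perm V where
  toFun v := ⟨(v.1.1, v.1.2 + 2 * v.1.1), Vne' _ _ 2 v.2⟩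
  invFun v := ⟨(v.1.1, v.1.2 + (-2) * v.1.1), Vne' _ _ (-2) v.2⟩
  left_inv := by rintro ⟨⟨u, w⟩, h⟩; apply Subtype.ext; simp
  right_inv := by rintro ⟨⟨u, w⟩, h⟩; apply Subtype.ext; simp

def sanov : F2 →* Equiv.Perm V := FreeGroup.lift ![sA, sB]

def XX : Fin 2 → Set V :=
  ![{v | (v.1.1 * v.1.2 > 0 ∧ v.1.2 ^ 2 ≤ v.1.1 ^ 2) ∨ v.1.2 = 0},
    {v | (v.1.1 * v.1.2 > 0 ∧ v.1.1 ^ 2 < v.1.2 ^ 2) ∨ v.1.1 = 0}]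

def YY : Fin 2 → Set V :=
  ![{v | v.1.1 * v.1.2 < 0 ∧ v.1.2 ^ 2 < v.1.1 ^ 2},
    {v | v.1.1 * v.1.2 < 0 ∧ v.1.1 ^ 2 ≤ v.1.2 ^ 2}]

lemma pp0 : sA • (YY 0)ᶜ ⊆ XX 0 := by
  rintro z hz
  rw [Set.mem_smul_set] at hz
  obtain ⟨⟨⟨u, w⟩, hv⟩, hmem, rfl⟩ := hz
  simp only [Set.mem_compl_iff, YY, Matrix.cons_val_zero, Set.mem_setOf_eq, not_and,
    not_lt] at hmem
  show _ ∈ XX 0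
  simp only [XX, Matrix.cons_val_zero, Set.mem_setOf_eq, Equiv.Perm.smul_def]
  dsimp [sA]
  rcases eq_or_ne w 0 with hw | hw
  · right; exact hw
  · left
    have hw2 : 0 < w ^ 2 := by positivity
    rcases le_or_gt 0 (u * w) with h | h
    · constructor
      · nlinarith
      · nlinarith [sq_nonneg (u + w)]
    · have h2 := hmem h
      constructor
      · nlinarith [sq_nonneg (u + w)]
      · nlinarith [sq_nonneg (u + w)]

lemma pp0' : sA⁻¹ • (XX 0)ᶜ ⊆ YY 0 := by
  rintro z hz
  rw [Set.mem_smul_set] at hz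
  obtain ⟨⟨⟨u, w⟩, hv⟩, hmem, rfl⟩ := hz
  simp only [Set.mem_compl_iff, XX, Matrix.cons_val_zero, Set.mem_setOf_eq, not_or, not_and,
    not_le] at hmem
  obtain ⟨hmem, hw⟩ := hmem
  show _ ∈ YY 0
  simp only [YY, Matrix.cons_val_zero, Set.mem_setOf_eq, Equiv.Perm.smul_def]
  rw [Equiv.Perm.inv_def]
  dsimp [sA]
  have hw2 : 0 < w ^ 2 := by positivity
  rcases le_or_gt (u * w) 0 with h | h
  · constructor
    · nlinarith
    · nlinarith [sq_nonneg (u - w)]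
  · have h2 := hmem h
    have huw : u * w < w ^ 2 := by nlinarith [sq_nonneg (u - w)]
    constructor
    · nlinarith
    · rcases lt_or_gt_of_ne hw with hwneg | hwpos
      · have hu : 0 > u := by nlinarith
        have h3 : u - w > 0 ∨ u - w < 0 → True := fun _ => trivial
        have huw' : w < u := by nlinarith
        nlinarith [mul_pos (show (0:ℤ) < u - w by nlinarith) (show (0:ℤ) < u - 3 * w by nlinarith)]
      · have hu : 0 < u := by nlinarith
        have huw' : u < w := by nlinarith
        nlinarith [mul_pos (show (0:ℤ) < w - u by nlinarith) (show (0:ℤ) < 3 * w - u by nlinarith)]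

lemma pp1 : sB • (YY 1)ᶜ ⊆ XX 1 := by
  rintro z hz
  rw [Set.mem_smul_set] at hz
  obtain ⟨⟨⟨u, w⟩, hv⟩, hmem, rfl⟩ := hz
  simp only [Set.mem_compl_iff, YY, Matrix.cons_val_one, Matrix.head_cons, Matrix.cons_val_zero, Set.mem_setOf_eq,
    not_and, not_le] at hmem
  show _ ∈ XX 1
  simp only [XX, Matrix.cons_val_one, Matrix.head_cons, Matrix.cons_val_zero, Set.mem_setOf_eq, Equiv.Perm.smul_def]
  dsimp [sB]
  rcases eq_or_ne u 0 with hu | hu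
  · right; exact hu
  · left
    have hu2 : 0 < u ^ 2 := by positivity
    rcases le_or_gt 0 (u * w) with h | h
    · constructor
      · nlinarith
      · nlinarith [sq_nonneg (u + w)]
    · have h2 := hmem h
      constructor
      · nlinarith [sq_nonneg (u + w)]
      · nlinarith [sq_nonneg (u + w)]

lemma pp1' : sB⁻¹ • (XX 1)ᶜ ⊆ YY 1 := by
  rintro z hz
  rw [Set.mem_smul_set] at hz
  obtain ⟨⟨⟨u, w⟩, hv⟩, hmem, rfl⟩ := hz
  simp only [Set.mem_compl_iff, XX, Matrix.cons_val_one, Matrix.head_cons, Matrix.cons_val_zero, Set.mem_setOf_eq,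
    not_or, not_and, not_lt] at hmem
  obtain ⟨hmem, hu⟩ := hmem
  show _ ∈ YY 1
  simp only [YY, Matrix.cons_val_one, Matrix.head_cons, Matrix.cons_val_zero, Set.mem_setOf_eq, Equiv.Perm.smul_def]
  rw [Equiv.Perm.inv_def]
  dsimp [sB]
  have hu2 : 0 < u ^ 2 := by positivity
  rcases le_or_gt (u * w) 0 with h | h
  · constructor
    · nlinarith
    · nlinarith [sq_nonneg (u - w)]
  · have h2 := hmem h
    have huw : u * w ≤ u ^ 2 := by nlinarith [sq_nonneg (u - w)]
    constructor
    · nlinarith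
    · nlinarith

theorem sanov_injective : Function.Injective sanov := by
  apply FreeGroup.injective_lift_of_ping_pong ![sA, sB] XX YY
  · -- nonempty
    intro i
    fin_cases i
    · exact ⟨⟨(1, 0), by simp [Prod.ext_iff]⟩, Or.inr rfl⟩
    · exact ⟨⟨(0, 1), by simp [Prod.ext_iff]⟩, Or.inr rfl⟩
  · -- X pairwise disjoint
    intro i j hij
    have key : Disjoint (XX 0) (XX 1) := by
      rw [Set.disjoint_left]
      rintro ⟨⟨u, w⟩, hv⟩ h1 h2
      simp only [XX, Set.mem_setOf_eq, Matrix.cons_val_zero, Matrix.cons_val_one,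
        Matrix.head_cons] at h1 h2
      rcases h1 with ⟨h1, h1'⟩ | h1 <;> rcases h2 with ⟨h2, h2'⟩ | h2
      · nlinarith
      · subst h2; nlinarith
      · subst h1; nlinarith
      · exact hv (Prod.ext h2 h1)
    fin_cases i <;> fin_cases j <;> simp_all [Function.onFun]
    exact key.symm
  · -- Y pairwise disjoint
    intro i j hij
    have key : Disjoint (YY 0) (YY 1) := by
      rw [Set.disjoint_left]
      rintro ⟨⟨u, w⟩, hv⟩ h1 h2
      simp only [YY, Set.mem_setOf_eq, Matrix.cons_val_zero, Matrix.cons_val_one,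
        Matrix.head_cons] at h1 h2
      nlinarith [h1.1, h1.2, h2.1, h2.2]
    fin_cases i <;> fin_cases j <;> simp_all [Function.onFun]
    exact key.symm
  · -- X i disjoint Y j
    intro i j
    fin_cases i <;> fin_cases j <;>
    · simp only [Function.onFun]; rw [Set.disjoint_left]
      rintro ⟨⟨u, w⟩, hv⟩ h1 h2
      simp only [XX, YY, Set.mem_setOf_eq, Matrix.cons_val_zero, Matrix.cons_val_one,
        Matrix.head_cons, Fin.mk_one, Fin.zero_eta] at h1 h2
      rcases h1 with ⟨h1, h1'⟩ | h1 <;>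
        [skip; subst h1] <;> nlinarith [h2.1, h2.2]
  · -- a i • (Y i)ᶜ ⊆ X i
    intro i
    fin_cases i
    · exact pp0
    · exact pp1
  · -- (a i)⁻¹ • (X i)ᶜ ⊆ Y i
    intro i
    fin_cases i
    · exact pp0'
    · exact pp1'

/-! ## Residual finiteness via reduction mod m -/

def sAm (m : ℕ) : Equiv.Perm (ZMod m × ZMod m) where
  toFun p := (p.1 + 2 * p.2, p.2)
  invFun p := (p.1 - 2 * p.2, p.2)
  left_inv p := by simp
  right_inv p := by simp

def sBm (m : ℕ) : Equiv.Perm (ZMod m × ZMod m) where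
  toFun p := (p.1, p.2 + 2 * p.1)
  invFun p := (p.1, p.2 - 2 * p.1)
  left_inv p := by simp
  right_inv p := by simp

def sanovm (m : ℕ) : F2 →* Equiv.Perm (ZMod m × ZMod m) := FreeGroup.lift ![sAm m, sBm m]

def red (m : ℕ) (v : V) : ZMod m × ZMod m := ((v.1.1 : ZMod m), (v.1.2 : ZMod m))

lemma equivar (m : ℕ) : ∀ (g : F2) (v : V), sanovm m g (red m v) = red m (sanov g v) := by
  have inv_step : ∀ g : F2, (∀ v, sanovm m g (red m v) = red m (sanov g v)) →
      ∀ v, sanovm m g⁻¹ (red m v) = red m (sanov g⁻¹ v) := by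
    intro g hg v
    rw [map_inv, map_inv]
    have h1 := hg ((sanov g)⁻¹ v)
    rw [Equiv.Perm.inv_def, Equiv.apply_symm_apply] at h1
    rw [← h1, Equiv.Perm.inv_def, Equiv.symm_apply_apply, Equiv.Perm.inv_def]
  intro g
  induction g using FreeGroup.induction_on with
  | C1 => intro v; simp [map_one]
  | of x =>
    intro v
    have hx : (pure x : F2) = FreeGroup.of x := rfl
    simp only [sanovm, sanov, FreeGroup.lift_apply_of]
    fin_cases x
    · show sAm m (red m v) = red m (sA v)
      simp only [sAm, sA, red, Equiv.coe_fn_mk]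
      push_cast
      ring_nf
    · show sBm m (red m v) = red m (sB v)
      simp only [sBm, sB, red, Equiv.coe_fn_mk]
      push_cast
      ring_nf
  | inv_of x ih => exact inv_step _ ih
  | mul a b iha ihb =>
    intro v
    rw [map_mul, map_mul]
    simp only [Equiv.Perm.mul_apply]
    rw [ihb, iha]

theorem rf (w : F2) (hw : w ≠ 1) :
    ∃ (Q : Type) (_ : Group Q) (_ : Finite Q) (π : F2 →* Q), π w ≠ 1 := by
  have h1 : sanov w ≠ 1 := by
    intro h
    exact hw (sanov_injective (by rw [h, map_one]))
  have h2 : ∃ v : V, sanov w v ≠ v := by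
    by_contra h
    push_neg at h
    exact h1 (Equiv.ext fun v => (h v).trans (Equiv.Perm.one_apply v).symm)
  obtain ⟨v, hv⟩ := h2
  set p := (sanov w v).1 with hp
  set pq := v.1 with hq
  have hne : p ≠ pq := fun h => hv (Subtype.ext h)
  set M : ℕ := (p.1 - pq.1).natAbs + (p.2 - pq.2).natAbs + 1 with hM
  haveI : NeZero M := ⟨by omega⟩
  refine ⟨Equiv.Perm (ZMod M × ZMod M), inferInstance, inferInstance, sanovm M, ?_⟩
  intro hone
  have heq := equivar M w v
  rw [hone, Equiv.Perm.one_apply] at heq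
  have e1 : (pq.1 : ZMod M) = (p.1 : ZMod M) := congrArg Prod.fst heq
  have e2 : (pq.2 : ZMod M) = (p.2 : ZMod M) := congrArg Prod.snd heq
  rw [ZMod.intCast_eq_intCast_iff] at e1 e2
  have d1 : (M : ℤ) ∣ p.1 - pq.1 := e1.dvd
  have d2 : (M : ℤ) ∣ p.2 - pq.2 := e2.dvd
  have d1' : M ∣ (p.1 - pq.1).natAbs := Int.natAbs_dvd_natAbs.mpr (by simpa using d1)
  have d2' : M ∣ (p.2 - pq.2).natAbs := Int.natAbs_dvd_natAbs.mpr (by simpa using d2)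
  have hne' : (p.1 - pq.1).natAbs ≠ 0 ∨ (p.2 - pq.2).natAbs ≠ 0 := by
    by_contra h
    push_neg at h
    apply hne
    obtain ⟨h1', h2'⟩ := h
    rw [Int.natAbs_eq_zero, sub_eq_zero] at h1' h2'
    exact Prod.ext h1' h2'
  rcases hne' with h | h
  · have := Nat.le_of_dvd (Nat.pos_of_ne_zero h) d1'
    omega
  · have := Nat.le_of_dvd (Nat.pos_of_ne_zero h) d2'
    omega

/-! ## Hopf property for F2 -/

theorem hopf (φ : F2 →* F2) (hs : Function.Surjective φ) : Function.Injective φ := by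
  rw [injective_iff_map_eq_one]
  intro w hw1
  by_contra hw
  obtain ⟨Q, _, _, π, hπ⟩ := rf w hw
  haveI : Finite (Fin 2 → Q) := inferInstance
  haveI : Finite (F2 →* Q) := Finite.of_equiv _ FreeGroup.lift
  have hinj : Function.Injective fun ψ : F2 →* Q => ψ.comp φ := by
    intro ψ1 ψ2 h
    refine MonoidHom.ext fun x => ?_
    obtain ⟨y, rfl⟩ := hs x
    exact DFunLike.congr_fun h y
  obtain ⟨ψ, hψ⟩ := Finite.injective_iff_surjective.mp hinj π
  apply hπ
  have := DFunLike.congr_fun hψ w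
  simp only [MonoidHom.comp_apply] at this
  rw [← this, hw1, map_one]

/-! ## Heisenberg group and non-commutation -/

@[ext] structure Heis where
  x : ℤ
  y : ℤ
  z : ℤ

instance : Mul Heis := ⟨fun p q => ⟨p.x + q.x, p.y + q.y, p.z + q.z + p.x * q.y⟩⟩
instance : One Heis := ⟨⟨0, 0, 0⟩⟩
instance : Inv Heis := ⟨fun p => ⟨-p.x, -p.y, -p.z + p.x * p.y⟩⟩

lemma Heis.mul_def (p q : Heis) :
    p * q = ⟨p.x + q.x, p.y + q.y, p.z + q.z + p.x * q.y⟩ := rfl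
lemma Heis.one_def : (1 : Heis) = ⟨0, 0, 0⟩ := rfl
lemma Heis.inv_def (p : Heis) : p⁻¹ = ⟨-p.x, -p.y, -p.z + p.x * p.y⟩ := rfl

instance : Group Heis where
  mul_assoc p q r := by ext <;> simp [Heis.mul_def] <;> ring
  one_mul p := by ext <;> simp [Heis.mul_def, Heis.one_def]
  mul_one p := by ext <;> simp [Heis.mul_def, Heis.one_def]
  inv_mul_cancel p := by ext <;> simp [Heis.mul_def, Heis.one_def, Heis.inv_def]

/-- projection to the two abelianized coordinates -/
def Heis.pi : Heis →* Multiplicative (ℤ × ℤ) where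
  toFun p := Multiplicative.ofAdd (p.x, p.y)
  map_one' := rfl
  map_mul' p q := rfl

lemma Heis.commutator_central (g : Heis) (hg : g ∈ commutator Heis) :
    g.x = 0 ∧ g.y = 0 := by
  have h := Abelianization.commutator_subset_ker Heis.pi hg
  rw [MonoidHom.mem_ker] at h
  have h2 : ((g.x, g.y) : ℤ × ℤ) = 0 := h
  simpa [Prod.ext_iff] using h2

def hH : F2 →* Heis := FreeGroup.lift ![⟨1, 0, 0⟩, ⟨0, 1, 0⟩]

lemma hom_commutator_mem {G1 G2 : Type*} [Group G1] [Group G2] (f : G1 →* G2) (g : G1)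
    (hg : g ∈ commutator G1) : f g ∈ commutator G2 := by
  have : Subgroup.map f (commutator G1) ≤ commutator G2 := by
    rw [commutator, Subgroup.map_commutator]
    exact Subgroup.commutator_mono le_top le_top
  exact this (Subgroup.mem_map_of_mem f hg)

lemma noncomm (q r : ℤ) (hq : q ≠ 0) (hr : r ≠ 0) (c1 d1 : F2)
    (hc : c1 ∈ commutator F2) (hd : d1 ∈ commutator F2) :
    ¬ Commute (FreeGroup.of (0 : Fin 2) ^ q * c1) (FreeGroup.of (1 : Fin 2) ^ r * d1) := by
  intro hcomm
  set A := hH (FreeGroup.of (0 : Fin 2) ^ q * c1) with hA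
  set B := hH (FreeGroup.of (1 : Fin 2) ^ r * d1) with hB
  have hcAB : Commute A B := hcomm.map hH
  have hkill : ∀ cc : F2, cc ∈ commutator F2 → Heis.pi (hH cc) = 1 := by
    intro cc hcc
    have := Abelianization.commutator_subset_ker (Heis.pi.comp hH) hcc
    rwa [MonoidHom.mem_ker] at this
  have hApi : Heis.pi A = Multiplicative.ofAdd ((q : ℤ), (0 : ℤ)) := by
    rw [hA, map_mul, map_mul, map_zpow, map_zpow, hkill c1 hc, mul_one]
    have h0 : hH (FreeGroup.of (0 : Fin 2)) = (⟨1, 0, 0⟩ : Heis) := by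
      simp [hH]
    rw [h0]
    show Multiplicative.ofAdd ((1 : ℤ), (0 : ℤ)) ^ q = _
    rw [← ofAdd_zsmul]
    congr 1
    simp
  have hBpi : Heis.pi B = Multiplicative.ofAdd ((0 : ℤ), (r : ℤ)) := by
    rw [hB, map_mul, map_mul, map_zpow, map_zpow, hkill d1 hd, mul_one]
    have h0 : hH (FreeGroup.of (1 : Fin 2)) = (⟨0, 1, 0⟩ : Heis) := by
      simp [hH]
    rw [h0]
    show Multiplicative.ofAdd ((0 : ℤ), (1 : ℤ)) ^ r = _
    rw [← ofAdd_zsmul]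
    congr 1
    simp
  have hAc : A.x = q ∧ A.y = 0 := by
    have := Multiplicative.ofAdd.injective (a₁ := (A.x, A.y)) (a₂ := (q, 0)) hApi
    simpa [Prod.ext_iff] using this
  have hBc : B.x = 0 ∧ B.y = r := by
    have := Multiplicative.ofAdd.injective (a₁ := (B.x, B.y)) (a₂ := ((0 : ℤ), r)) hBpi
    simpa [Prod.ext_iff] using this
  have hz := congrArg Heis.z hcAB
  rw [Heis.mul_def, Heis.mul_def] at hz
  simp only at hz
  rw [hAc.1, hAc.2, hBc.1, hBc.2] at hz
  have : q * r = 0 := by linarith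
  exact mul_ne_zero hq hr this

/-! ## Free groups over subsingleton types are commutative -/

lemma freeGroup_subsingleton_comm {S : Type*} [Subsingleton S] (u v : FreeGroup S) :
    Commute u v := by
  have key : ∀ (x : S) (v : FreeGroup S), Commute (FreeGroup.of x) v := by
    intro x v
    induction v using FreeGroup.induction_on with
    | C1 => exact Commute.one_right _
    | of y => rw [Subsingleton.elim x y]
    | inv_of y ih => exact ih.inv_right
    | mul a b iha ihb => exact iha.mul_right ihb
  induction u using FreeGroup.induction_on with
  | C1 => exact Commute.one_left _
  | of x => exact key x v
  | inv_of x _ => exact (key x v).inv_left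
  | mul a b iha ihb => exact iha.mul_left ihb

/-! ## The main injectivity lemma -/

theorem lift_injective_of_not_commute (a b : F2) (hab : ¬ Commute a b) :
    Function.Injective (FreeGroup.lift ![a, b] : F2 →* F2) := by
  classical
  set g : F2 →* F2 := FreeGroup.lift ![a, b] with hgdef
  set H : Subgroup F2 := g.range with hHdef
  haveI : IsFreeGroup H := inferInstance
  have ha : a ∈ H := ⟨FreeGroup.of 0, by simp [hgdef]⟩
  have hb : b ∈ H := ⟨FreeGroup.of 1, by simp [hgdef]⟩
  have hSS : Nontrivial (IsFreeGroup.Generators H) := by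
    by_contra hss
    rw [not_nontrivial_iff_subsingleton] at hss
    apply hab
    have hcomm : ∀ u v : H, Commute u v := by
      intro u v
      have h1 := freeGroup_subsingleton_comm (IsFreeGroup.toFreeGroup H u)
        (IsFreeGroup.toFreeGroup H v)
      have h2 := h1.map (IsFreeGroup.toFreeGroup H).symm.toMonoidHom
      simpa using h2
    have h3 := hcomm ⟨a, ha⟩ ⟨b, hb⟩
    have h4 := congrArg Subtype.val h3
    simpa [Commute, SemiconjBy] using h4
  obtain ⟨s, t, hst⟩ := exists_pair_ne (IsFreeGroup.Generators H)
  set ψ0 : IsFreeGroup.Generators H → F2 :=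
    fun u => if u = s then FreeGroup.of 0 else if u = t then FreeGroup.of 1 else 1 with hψ0
  set ψ : H →* F2 := IsFreeGroup.lift ψ0 with hψdef
  have hψs : Function.Surjective ψ := by
    rw [← MonoidHom.range_eq_top, eq_top_iff, ← FreeGroup.closure_range_of (Fin 2),
      Subgroup.closure_le]
    rintro _ ⟨i, rfl⟩
    fin_cases i
    · exact ⟨IsFreeGroup.of s, by simp [hψdef, IsFreeGroup.lift_of, hψ0]⟩
    · refine ⟨IsFreeGroup.of t, ?_⟩
      rw [hψdef, IsFreeGroup.lift_of, hψ0]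
      simp [hst.symm]
  have hφ : Function.Surjective (ψ.comp g.rangeRestrict) := by
    rw [MonoidHom.coe_comp]
    exact hψs.comp g.rangeRestrict_surjective
  have hinj := hopf _ hφ
  intro u v huv
  apply hinj
  simp only [MonoidHom.comp_apply]
  congr 1
  exact Subtype.ext (by rw [MonoidHom.coe_rangeRestrict, MonoidHom.coe_rangeRestrict]; exact huv)

/-- Let `G = F₂ × ℤ` with `F₂` free on `x = of 0`, `y = of 1`. If `q, r` are nonzero
integers and `c, d ∈ [G,G]`, then `(x,0)^q ⬝ c` and `(y,0)^r ⬝ d` generate a non-abelian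
free subgroup of `G` (i.e. there is an injective homomorphism from the free group of rank
2 sending the two generators to these two elements). -/
theorem stmt_8 (q r : ℤ) (hq : q ≠ 0) (hr : r ≠ 0)
    (c d : FreeGroup (Fin 2) × Multiplicative ℤ)
    (hc : c ∈ commutator (FreeGroup (Fin 2) × Multiplicative ℤ))
    (hd : d ∈ commutator (FreeGroup (Fin 2) × Multiplicative ℤ)) :
    ∃ f : FreeGroup (Fin 2) →* FreeGroup (Fin 2) × Multiplicative ℤ,
      Function.Injective f ∧
      f (FreeGroup.of 0) = (FreeGroup.of (0 : Fin 2), 1) ^ q * c ∧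
      f (FreeGroup.of 1) = (FreeGroup.of (1 : Fin 2), 1) ^ r * d := by
  have hc2 : c.2 = 1 := by
    have h := Abelianization.commutator_subset_ker
      (MonoidHom.snd F2 (Multiplicative ℤ)) hc
    rwa [MonoidHom.mem_ker] at h
  have hd2 : d.2 = 1 := by
    have h := Abelianization.commutator_subset_ker
      (MonoidHom.snd F2 (Multiplicative ℤ)) hd
    rwa [MonoidHom.mem_ker] at h
  have hc1 : c.1 ∈ commutator F2 :=
    hom_commutator_mem (MonoidHom.fst F2 (Multiplicative ℤ)) c hc
  have hd1 : d.1 ∈ commutator F2 :=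
    hom_commutator_mem (MonoidHom.fst F2 (Multiplicative ℤ)) d hd
  have hab := noncomm q r hq hr c.1 d.1 hc1 hd1
  set g : F2 →* F2 :=
    FreeGroup.lift ![FreeGroup.of (0 : Fin 2) ^ q * c.1, FreeGroup.of (1 : Fin 2) ^ r * d.1]
    with hgdef
  have hg := lift_injective_of_not_commute _ _ hab
  refine ⟨(MonoidHom.inl F2 (Multiplicative ℤ)).comp g, ?_, ?_, ?_⟩
  · rw [MonoidHom.coe_comp]
    refine Function.Injective.comp (fun x y h => ?_) hg
    simpa [Prod.ext_iff] using h
  · simp only [MonoidHom.comp_apply, hgdef, FreeGroup.lift_apply_of, Matrix.cons_val_zero,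
      MonoidHom.inl_apply]
    rw [Prod.ext_iff]
    constructor
    · simp [Prod.pow_fst]
    · simp [Prod.pow_snd, hc2]
  · simp only [MonoidHom.comp_apply, hgdef, FreeGroup.lift_apply_of, Matrix.cons_val_one,
      Matrix.head_cons, MonoidHom.inl_apply]
    rw [Prod.ext_iff]
    constructor
    · simp [Prod.pow_fst]
    · simp [Prod.pow_snd, hd2]
end

section
/- Let Γ be a finite simplicial graph and A_Γ the associated right-angled Artin group. If v and w are distinct non-adjacent vertices of Γ, q, r are nonzero integers, and c, d ∈ [A_Γ, A_Γ], then v^q c and w^r d do not commute in A_Γ. Consequently, if K is an abelian subgroup of A_Γ, the set of vertices v with v ∈ √(K[A_Γ,A_Γ]) spans a clique in Γ. -/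
open scoped Pointwise

/-! Auxiliary: the integer Heisenberg group. -/

@[ext] structure Heis_s10 where
  a : ℤ
  b : ℤ
  c : ℤ

namespace Heis_s10

instance : Mul Heis_s10 := ⟨fun g h => ⟨g.a + h.a, g.b + h.b, g.c + h.c + g.a * h.b⟩⟩
instance : One Heis_s10 := ⟨⟨0, 0, 0⟩⟩
instance : Inv Heis_s10 := ⟨fun g => ⟨-g.a, -g.b, -g.c + g.a * g.b⟩⟩

@[simp] lemma mul_a (g h : Heis_s10) : (g * h).a = g.a + h.a := rfl
@[simp] lemma mul_b (g h : Heis_s10) : (g * h).b = g.b + h.b := rfl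
@[simp] lemma mul_c (g h : Heis_s10) : (g * h).c = g.c + h.c + g.a * h.b := rfl
@[simp] lemma one_a : (1 : Heis_s10).a = 0 := rfl
@[simp] lemma one_b : (1 : Heis_s10).b = 0 := rfl
@[simp] lemma one_c : (1 : Heis_s10).c = 0 := rfl
@[simp] lemma inv_a (g : Heis_s10) : g⁻¹.a = -g.a := rfl
@[simp] lemma inv_b (g : Heis_s10) : g⁻¹.b = -g.b := rfl
@[simp] lemma inv_c (g : Heis_s10) : g⁻¹.c = -g.c + g.a * g.b := rfl

instance : Group Heis_s10 where
  mul_assoc g h k := by ext <;> simp <;> ring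
  one_mul g := by ext <;> simp
  mul_one g := by ext <;> simp
  inv_mul_cancel g := by ext <;> simp <;> ring

def X : Heis_s10 := ⟨1, 0, 0⟩
def Y : Heis_s10 := ⟨0, 1, 0⟩

lemma X_zpow (q : ℤ) : X ^ q = ⟨q, 0, 0⟩ := by
  induction q using Int.induction_on with
  | zero => ext <;> simp
  | succ n ih => rw [zpow_add_one, ih]; ext <;> simp [X]
  | pred n ih =>
    rw [zpow_sub_one, ih]; ext <;> simp [X, sub_eq_add_neg]

lemma Y_zpow (r : ℤ) : Y ^ r = ⟨0, r, 0⟩ := by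
  induction r using Int.induction_on with
  | zero => ext <;> simp
  | succ n ih => rw [zpow_add_one, ih]; ext <;> simp [Y]
  | pred n ih =>
    rw [zpow_sub_one, ih]; ext <;> simp [Y, sub_eq_add_neg]

lemma commutator_le_center : commutator Heis_s10 ≤ Subgroup.center Heis_s10 := by
  rw [commutator_def]
  refine Subgroup.commutator_le.mpr fun g _ h _ => Subgroup.mem_center_iff.mpr fun k => ?_
  ext <;> simp [commutatorElement_def] <;> ring

lemma not_commute_XY (q r : ℤ) (hq : q ≠ 0) (hr : r ≠ 0) : ¬ Commute (X ^ q) (Y ^ r) := by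
  intro h
  have := congrArg Heis_s10.c h.eq
  rw [X_zpow, Y_zpow] at this
  simp at this
  rcases this with h | h <;> [exact hq h; exact hr h]

end Heis_s10

/-- The commutation relations defining the right-angled Artin group on a graph `Γ`. -/
def raagRels {V : Type*} (Γ : SimpleGraph V) : Set (FreeGroup V) :=
  {r | ∃ v w : V, Γ.Adj v w ∧
    r = FreeGroup.of v * FreeGroup.of w * (FreeGroup.of v)⁻¹ * (FreeGroup.of w)⁻¹}

/-- The right-angled Artin group on the graph `Γ`. -/
def RAAG {V : Type*} (Γ : SimpleGraph V) : Type _ := PresentedGroup (raagRels Γ)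

instance {V : Type*} (Γ : SimpleGraph V) : Group (RAAG Γ) :=
  inferInstanceAs (Group (PresentedGroup (raagRels Γ)))

/-- The generator of `RAAG Γ` corresponding to the vertex `v`. -/
def RAAG.gen {V : Type*} (Γ : SimpleGraph V) (v : V) : RAAG Γ := PresentedGroup.of v

section Retract

variable {V : Type*} (Γ : SimpleGraph V) (v w : V)

open scoped Classical in
/-- Map the generators `v, w` to the Heisenberg generators, all others to 1. -/
noncomputable def raagToHeisFun : V → Heis_s10 := fun x =>
  if x = v then Heis_s10.X else if x = w then Heis_s10.Y else 1

lemma raag_rels_hold (hvw : v ≠ w) (hadj : ¬ Γ.Adj v w) :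
    ∀ r ∈ raagRels Γ, (FreeGroup.lift (raagToHeisFun v w)) r = 1 := by
  classical
  rintro r ⟨x, y, hxy, rfl⟩
  have hcomm : Commute (raagToHeisFun v w x) (raagToHeisFun v w y) := by
    unfold raagToHeisFun
    by_cases hx : x = v
    · subst hx
      have hy1 : y ≠ x := fun h => (Γ.irrefl (h ▸ hxy))
      have hy2 : y ≠ w := fun h => hadj (h ▸ hxy)
      simp [hy1.symm, hy2, hy1]
    · by_cases hx2 : x = w
      · subst hx2
        have hy1 : y ≠ x := fun h => (Γ.irrefl (h ▸ hxy))
        have hy2 : y ≠ v := fun h => hadj (Γ.adj_symm (h ▸ hxy))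
        simp [hx, hy2, hy1]
      · simp [hx, hx2]
  simp only [map_mul, map_inv, FreeGroup.lift_apply_of]
  rw [hcomm.eq]
  group

/-- The retraction `RAAG Γ →* Heis`. -/
noncomputable def raagToHeis (hvw : v ≠ w) (hadj : ¬ Γ.Adj v w) : RAAG Γ →* Heis_s10 :=
  PresentedGroup.toGroup (raag_rels_hold Γ v w hvw hadj)

end Retract

/-- In a RAAG `A_Γ` on a finite simplicial graph: (1) for distinct non-adjacent vertices
`v, w`, nonzero integers `q, r` and commutators `c, d ∈ [A_Γ,A_Γ]`, the elements `v^q c`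
and `w^r d` do not commute; and (2) consequently, for any abelian subgroup `K ≤ A_Γ`, the
vertices lying in the radical `√(K[A_Γ,A_Γ])` span a clique in `Γ`. -/
theorem stmt_10 {V : Type*} [Fintype V] (Γ : SimpleGraph V) :
    (∀ v w : V, v ≠ w → ¬ Γ.Adj v w → ∀ q r : ℤ, q ≠ 0 → r ≠ 0 →
      ∀ c d : RAAG Γ, c ∈ commutator (RAAG Γ) → d ∈ commutator (RAAG Γ) →
        ¬ Commute (RAAG.gen Γ v ^ q * c) (RAAG.gen Γ w ^ r * d)) ∧
    (∀ K : Subgroup (RAAG Γ), (∀ a ∈ K, ∀ b ∈ K, Commute a b) →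
      Γ.IsClique {v : V | ∃ q : ℤ, q ≠ 0 ∧ RAAG.gen Γ v ^ q ∈ K ⊔ commutator (RAAG Γ)}) := by
  classical
  have part1 : ∀ v w : V, v ≠ w → ¬ Γ.Adj v w → ∀ q r : ℤ, q ≠ 0 → r ≠ 0 →
      ∀ c d : RAAG Γ, c ∈ commutator (RAAG Γ) → d ∈ commutator (RAAG Γ) →
        ¬ Commute (RAAG.gen Γ v ^ q * c) (RAAG.gen Γ w ^ r * d) := by
    intro v w hvw hadj q r hq hr c d hc hd hcom
    set φ := raagToHeis Γ v w hvw hadj with hφ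
    have hφv : φ (RAAG.gen Γ v) = Heis_s10.X := by
      show PresentedGroup.toGroup _ (PresentedGroup.of v) = _
      rw [PresentedGroup.toGroup.of]
      simp [raagToHeisFun]
    have hφw : φ (RAAG.gen Γ w) = Heis_s10.Y := by
      show PresentedGroup.toGroup _ (PresentedGroup.of w) = _
      rw [PresentedGroup.toGroup.of]
      simp [raagToHeisFun, hvw.symm]
    -- images of commutators are central
    have hcent : ∀ g : RAAG Γ, g ∈ commutator (RAAG Γ) → φ g ∈ Subgroup.center Heis_s10 := by
      intro g hg
      apply Heis_s10.commutator_le_center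
      rw [commutator_def]
      have : φ g ∈ Subgroup.map φ (commutator (RAAG Γ)) := ⟨g, hg, rfl⟩
      rw [commutator_def, Subgroup.map_commutator] at this
      exact Subgroup.commutator_mono le_top le_top this
    have hc' := Subgroup.mem_center_iff.mp (hcent c hc)
    have hd' := Subgroup.mem_center_iff.mp (hcent d hd)
    have hkey : Commute (Heis_s10.X ^ q) (Heis_s10.Y ^ r) := by
      have h2 := congrArg φ hcom.eq
      simp only [map_mul, map_zpow, hφv, hφw] at h2
      -- h2 : X^q * φc * (Y^r * φd) = Y^r * φd * (X^q * φc)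
      have e1 : Heis_s10.X ^ q * φ c * (Heis_s10.Y ^ r * φ d)
          = Heis_s10.X ^ q * Heis_s10.Y ^ r * (φ c * φ d) := by
        simp only [mul_assoc]
        rw [← hc' (Heis_s10.Y ^ r * φ d)]
        simp only [mul_assoc]
        rw [hc' (φ d)]
      have e2 : Heis_s10.Y ^ r * φ d * (Heis_s10.X ^ q * φ c)
          = Heis_s10.Y ^ r * Heis_s10.X ^ q * (φ c * φ d) := by
        simp only [mul_assoc]
        rw [← hd' (Heis_s10.X ^ q * φ c)]
        simp only [mul_assoc]
      rw [e1, e2] at h2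
      exact mul_right_cancel h2
    exact Heis_s10.not_commute_XY q r hq hr hkey
  refine ⟨part1, ?_⟩
  intro K hK v hv w hw hvw
  by_contra hadj
  obtain ⟨q, hq, hqmem⟩ := hv
  obtain ⟨r, hr, hrmem⟩ := hw
  have hN : (commutator (RAAG Γ)).Normal := inferInstance
  have h1 : (RAAG.gen Γ v ^ q : RAAG Γ) ∈ (K : Set (RAAG Γ)) * (commutator (RAAG Γ) : Set (RAAG Γ)) := by
    rw [← Subgroup.mul_normal K (commutator (RAAG Γ))]; exact hqmem
  have h2 : (RAAG.gen Γ w ^ r : RAAG Γ) ∈ (K : Set (RAAG Γ)) * (commutator (RAAG Γ) : Set (RAAG Γ)) := by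
    rw [← Subgroup.mul_normal K (commutator (RAAG Γ))]; exact hrmem
  obtain ⟨k, hk, c, hc, hkc⟩ := h1
  obtain ⟨k', hk', d, hd, hkd⟩ := h2
  have hkeq : k = RAAG.gen Γ v ^ q * c⁻¹ := by rw [← hkc]; group
  have hkeq' : k' = RAAG.gen Γ w ^ r * d⁻¹ := by rw [← hkd]; group
  have := hK k hk k' hk'
  rw [hkeq, hkeq'] at this
  exact part1 v w hvw hadj q r hq hr c⁻¹ d⁻¹ (inv_mem hc) (inv_mem hd) this
end

section
/- Let Γ be a finite simplicial graph such that: (1) no closed star of a vertex separates Γ, (2) there are no distinct vertices v ≠ w with lk(v) ⊆ st(w), and (3) Γ is connected. Then Γ has no separating cliques: for every clique K in Γ (including the empty clique), the induced subgraph on V(Γ) \ K is connected. -/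
/-- A set `S` of vertices separates `Γ` if the induced subgraph on its complement is
disconnected. -/
def Separates {V : Type*} (Γ : SimpleGraph V) (S : Set V) : Prop :=
  ¬ (Γ.induce Sᶜ).Preconnected

/-- Let `Γ` be a finite connected simplicial graph in which no closed star of a vertex
separates `Γ` and there are no distinct vertices `v ≠ w` with `lk(v) ⊆ st(w)`. Then `Γ`
has no separating cliques. -/
theorem stmt_11 {V : Type*} [Fintype V] (Γ : SimpleGraph V)
    (hstar : ∀ v : V, ¬ Separates Γ (insert v (Γ.neighborSet v)))
    (hlk : ∀ v w : V, v ≠ w → ¬ (Γ.neighborSet v ⊆ insert w (Γ.neighborSet w)))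
    (hconn : Γ.Connected) :
    ∀ K : Set V, Γ.IsClique K → ¬ Separates Γ K := by
  intro K hK hsep
  apply hsep
  intro a b
  by_cases hKe : ∃ v, v ∈ K
  · obtain ⟨v, hv⟩ := hKe
    set S : Set V := insert v (Γ.neighborSet v) with hS
    have hpre : (Γ.induce Sᶜ).Preconnected := not_not.mp (hstar v)
    have hKS : K ⊆ S := by
      intro x hx
      by_cases hxv : x = v
      · exact hxv ▸ Set.mem_insert _ _
      · exact Set.mem_insert_of_mem _ (hK hv hx (Ne.symm hxv))
    have hsub : (Sᶜ : Set V) ⊆ Kᶜ := Set.compl_subset_compl.mpr hKS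
    let f : Γ.induce Sᶜ →g Γ.induce Kᶜ := ⟨fun x => ⟨x.1, hsub x.2⟩, fun h => h⟩
    have key : ∀ u : ↥Kᶜ, ∃ x : ↥Sᶜ, (Γ.induce Kᶜ).Reachable u (f x) := by
      intro u
      by_cases hu : (u : V) ∈ S
      · have huv : (u : V) ≠ v := fun h => u.2 (h ▸ hv)
        obtain ⟨x, hx1, hx2⟩ := Set.not_subset.mp (hlk u v huv)
        have hxK : x ∈ Kᶜ := fun hxk => hx2 (hKS hxk)
        refine ⟨⟨x, hx2⟩, ?_⟩
        have hadj : (Γ.induce Kᶜ).Adj u ⟨x, hxK⟩ := hx1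
        exact hadj.reachable
      · exact ⟨⟨u, hu⟩, SimpleGraph.Reachable.refl _⟩
    obtain ⟨xa, hxa⟩ := key a
    obtain ⟨xb, hxb⟩ := key b
    exact hxa.trans (((hpre xa xb).map f).trans hxb.symm)
  · push_neg at hKe
    let f : Γ →g Γ.induce Kᶜ := ⟨fun x => ⟨x, hKe x⟩, fun h => h⟩
    exact (hconn.preconnected (a : V) (b : V)).map f
end

section
/- Let Γ be a finite simplicial graph that is not a complete graph, and suppose no clique of Γ with at most n vertices separates Γ. Let χ : A_Γ → ℝ be a homomorphism such that the set of vertices v with χ(v) = 0 spans a clique with at most n vertices. Then the living subgraph of χ (the induced subgraph on vertices v with χ(v) ≠ 0) is connected and dominating in Γ. -/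
/-- Let `Γ` be a finite non-complete simplicial graph in which no clique with at most `n`
vertices separates `Γ`, and let `χ : A_Γ → ℝ` be a character whose dead vertex set (the
vertices killed by `χ`) spans a clique with at most `n` vertices. Then the living
subgraph of `χ` is connected and dominating in `Γ`. -/
theorem stmt_12 {V : Type*} [Fintype V] (Γ : SimpleGraph V)
    (hnc : ∃ v w : V, v ≠ w ∧ ¬ Γ.Adj v w) (n : ℕ)
    (hsep : ∀ K : Set V, Γ.IsClique K → K.ncard ≤ n → (Γ.induce Kᶜ).Preconnected)
    (χ : RAAG Γ →* Multiplicative ℝ)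
    (hclique : Γ.IsClique {v : V | χ (RAAG.gen Γ v) = 1})
    (hcard : {v : V | χ (RAAG.gen Γ v) = 1}.ncard ≤ n) :
    (Γ.induce {v : V | χ (RAAG.gen Γ v) ≠ 1}).Connected ∧
      ∀ v : V, χ (RAAG.gen Γ v) = 1 →
        ∃ w : V, χ (RAAG.gen Γ w) ≠ 1 ∧ Γ.Adj v w := by
  set D : Set V := {v : V | χ (RAAG.gen Γ v) = 1} with hD
  obtain ⟨a, b, hab, hnadj⟩ := hnc
  -- some living vertex exists
  have hlive : ∃ x : V, x ∉ D := by
    by_contra h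
    push_neg at h
    exact hnadj (hclique (h a) (h b) hab)
  constructor
  · -- connectedness
    have hcompl : {v : V | χ (RAAG.gen Γ v) ≠ 1} = Dᶜ := rfl
    rw [hcompl]
    have hp := hsep D hclique hcard
    obtain ⟨x, hx⟩ := hlive
    haveI : Nonempty ↑(Dᶜ) := ⟨⟨x, hx⟩⟩
    exact SimpleGraph.Connected.mk hp
  · -- domination
    intro v hv
    by_contra h
    push_neg at h
    have hnb : Γ.neighborSet v ⊆ D := by
      intro w hw
      by_contra hw'
      exact h w hw' hw
    have hKclique : Γ.IsClique (Γ.neighborSet v) := hclique.subset hnb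
    have hKcard : (Γ.neighborSet v).ncard ≤ n :=
      le_trans (Set.ncard_le_ncard hnb (Set.toFinite D)) hcard
    have hp := hsep _ hKclique hKcard
    -- v is in the complement of its neighbor set
    have hvK : v ∈ (Γ.neighborSet v)ᶜ := fun hvv => Γ.irrefl hvv
    -- some vertex u ≠ v not adjacent to v
    have hu : ∃ u : V, u ≠ v ∧ ¬ Γ.Adj v u := by
      by_contra h'
      push_neg at h'
      -- then Γ is complete via st(v)
      apply hnadj
      by_cases ha : a = v
      · subst ha
        exact absurd (h' b (Ne.symm hab)) (fun hbv => hnadj hbv)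
      · by_cases hb : b = v
        · exact absurd (Γ.adj_symm (h' a ha)) (fun hav => hnadj (by subst hb; exact hav))
        · exact hKclique (h' a ha) (h' b hb) hab
    obtain ⟨u, huv, hunadj⟩ := hu
    have huK : u ∈ (Γ.neighborSet v)ᶜ := fun huu => hunadj huu
    obtain ⟨p⟩ := hp ⟨v, hvK⟩ ⟨u, huK⟩
    cases p with
    | nil => exact huv (by simp)
    | cons hadj _ =>
      rename_i w _
      have : Γ.Adj v ↑w := hadj
      exact w.2 this
end
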